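/- Let u be a real n_Y-vector with ‖u‖₂ = 1 and v any real n_X-vector. Then trace((u vᵀ)ᵀ 𝒜(u vᵀ)) = vᵀ B̂ v, where B̂ is the n_X×n_X matrix B̂ = λ(L_x² + 2 (uᵀ L_y u) L_x + (uᵀ L_y² u) I_{n_X}) + Σ_{α=1}^{n_inj} (uᵀ diag(Ω_α) u) X_α X_αᵀ. -/

import Mathlib

open Matrix

section aux

variable {m n p q : Type*} [Fintype m] [Fintype n] [Fintype p] [DecidableEq m]

lemma vecMulVec_transpose' (a : m → ℝ) (b : n → ℝ) :
    (vecMulVec a b)ᵀ = vecMulVec b a := by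
  ext i j; simp [vecMulVec_apply, mul_comm]

lemma vecMulVec_mul (a : m → ℝ) (b : n → ℝ) (M : Matrix n p ℝ) :
    vecMulVec a b * M = vecMulVec a (b ᵥ* M) := by
  ext i j
  simp [mul_apply, vecMulVec_apply, vecMul, dotProduct, Finset.mul_sum, mul_assoc]

lemma mul_vecMulVec (M : Matrix m n ℝ) (a : n → ℝ) (b : p → ℝ) :
    M * vecMulVec a b = vecMulVec (M *ᵥ a) b := by
  ext i j
  simp [mul_apply, vecMulVec_apply, mulVec, dotProduct, Finset.sum_mul, mul_assoc]

lemma vecMulVec_mul_vecMulVec (a : m → ℝ) (b : n → ℝ) (c : n → ℝ) (d : p → ℝ) :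
    vecMulVec a b * vecMulVec c d = (b ⬝ᵥ c) • vecMulVec a d := by
  ext i j
  simp [mul_apply, vecMulVec_apply, dotProduct, Finset.sum_mul]
  exact Finset.sum_congr rfl fun k _ => by ring

lemma trace_vecMulVec' (a : m → ℝ) (b : m → ℝ) :
    Matrix.trace (vecMulVec a b) = a ⬝ᵥ b := by
  simp [Matrix.trace, Matrix.diag, vecMulVec_apply, dotProduct]

lemma vecMulVec_mulVec (a : m → ℝ) (b : n → ℝ) (x : n → ℝ) :
    vecMulVec a b *ᵥ x = (b ⬝ᵥ x) • a := by
  ext i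
  simp only [mulVec, dotProduct, vecMulVec_apply, Pi.smul_apply, smul_eq_mul]
  rw [Finset.sum_mul]
  exact Finset.sum_congr rfl fun k _ => by ring

lemma sum_mulVec' {ι : Type*} (s : Finset ι) (M : ι → Matrix m n ℝ) (x : n → ℝ) :
    (∑ a ∈ s, M a) *ᵥ x = ∑ a ∈ s, M a *ᵥ x := by
  ext i
  simp [mulVec, dotProduct, Matrix.sum_apply, Finset.sum_mul]
  rw [Finset.sum_comm]

lemma dotProduct_sum' {ι : Type*} (s : Finset ι) (x : m → ℝ) (f : ι → m → ℝ) :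
    x ⬝ᵥ (∑ a ∈ s, f a) = ∑ a ∈ s, x ⬝ᵥ f a := by
  simp [dotProduct, Finset.mul_sum, Finset.sum_apply]
  rw [Finset.sum_comm]

end aux

/-- The operator `𝒜(W) = λ(W L_x² + 2 L_y W L_x + L_y² W) + Σ_α diag(Ω_α) W X_α X_αᵀ`. -/
noncomputable def opA {nY nX ninj : ℕ} (lam : ℝ)
    (Lx : Matrix (Fin nX) (Fin nX) ℝ) (Ly : Matrix (Fin nY) (Fin nY) ℝ)
    (X : Matrix (Fin nX) (Fin ninj) ℝ) (Om : Matrix (Fin nY) (Fin ninj) ℝ)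
    (W : Matrix (Fin nY) (Fin nX) ℝ) : Matrix (Fin nY) (Fin nX) ℝ :=
  lam • (W * Lx ^ 2 + (2 : ℝ) • (Ly * W * Lx) + Ly ^ 2 * W) +
    ∑ α : Fin ninj,
      Matrix.diagonal (fun i => Om i α) * W *
        Matrix.vecMulVec (fun k => X k α) (fun k => X k α)

/-- For `‖u‖₂ = 1`, `trace((u vᵀ)ᵀ 𝒜(u vᵀ)) = vᵀ B̂ v` where
`B̂ = λ(L_x² + 2(uᵀL_y u) L_x + (uᵀL_y²u) I) + Σ_α (uᵀ diag(Ω_α) u) X_αX_αᵀ`. -/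
theorem rank_one_quadratic_form_v {nY nX ninj : ℕ} (lam : ℝ)
    (Lx : Matrix (Fin nX) (Fin nX) ℝ) (Ly : Matrix (Fin nY) (Fin nY) ℝ)
    (X : Matrix (Fin nX) (Fin ninj) ℝ) (Om : Matrix (Fin nY) (Fin ninj) ℝ)
    (u : Fin nY → ℝ) (hu : ‖(EuclideanSpace.equiv (Fin nY) ℝ).symm u‖ = 1)
    (v : Fin nX → ℝ) :
    Matrix.trace ((Matrix.vecMulVec u v)ᵀ *
        opA lam Lx Ly X Om (Matrix.vecMulVec u v)) =
      v ⬝ᵥ (lam • (Lx ^ 2 + (2 * (u ⬝ᵥ Ly.mulVec u)) • Lx +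
            (u ⬝ᵥ (Ly ^ 2).mulVec u) • (1 : Matrix (Fin nX) (Fin nX) ℝ)) +
          ∑ α : Fin ninj,
            (u ⬝ᵥ (Matrix.diagonal (fun i => Om i α)).mulVec u) •
              Matrix.vecMulVec (fun k => X k α) (fun k => X k α)).mulVec v := by
  have huu : u ⬝ᵥ u = 1 := by
    have h := hu
    rw [EuclideanSpace.norm_eq] at h
    have h2 : (∑ i, ‖((EuclideanSpace.equiv (Fin nY) ℝ).symm u) i‖ ^ 2) = 1 := by
      rw [Real.sqrt_eq_one] at h
      simpa using h
    simpa [dotProduct, Real.norm_eq_abs, sq_abs, pow_two] using h2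
  rw [opA, vecMulVec_transpose']
  rw [Matrix.mul_add, Matrix.trace_add]
  -- first part
  have h1 : Matrix.trace (vecMulVec v u *
      (lam • (vecMulVec u v * Lx ^ 2 + (2:ℝ) • (Ly * vecMulVec u v * Lx) +
        Ly ^ 2 * vecMulVec u v))) =
      lam * ((v ⬝ᵥ (Lx ^ 2) *ᵥ v) + 2 * (u ⬝ᵥ Ly *ᵥ u) * (v ⬝ᵥ Lx *ᵥ v) +
        (u ⬝ᵥ (Ly ^ 2) *ᵥ u) * (v ⬝ᵥ v)) := by
    rw [Matrix.mul_smul, Matrix.trace_smul, Matrix.mul_add, Matrix.mul_add,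
      Matrix.trace_add, Matrix.trace_add, Matrix.mul_smul, Matrix.trace_smul]
    congr 1
    have e1 : Matrix.trace (vecMulVec v u * (vecMulVec u v * Lx ^ 2)) =
        v ⬝ᵥ (Lx ^ 2) *ᵥ v := by
      rw [_root_.vecMulVec_mul u v (Lx ^ 2), _root_.vecMulVec_mul_vecMulVec, huu, one_smul,
        trace_vecMulVec', dotProduct_mulVec, dotProduct_comm]
    have e2 : Matrix.trace (vecMulVec v u * (Ly * vecMulVec u v * Lx)) =
        (u ⬝ᵥ Ly *ᵥ u) * (v ⬝ᵥ Lx *ᵥ v) := by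
      rw [_root_.mul_vecMulVec Ly u v, _root_.vecMulVec_mul (Ly *ᵥ u) v Lx,
        _root_.vecMulVec_mul_vecMulVec, Matrix.trace_smul, trace_vecMulVec',
        dotProduct_comm u (Ly *ᵥ u), smul_eq_mul, dotProduct_mulVec,
        dotProduct_comm (v ᵥ* Lx) v]
    have e3 : Matrix.trace (vecMulVec v u * (Ly ^ 2 * vecMulVec u v)) =
        (u ⬝ᵥ (Ly ^ 2) *ᵥ u) * (v ⬝ᵥ v) := by
      rw [_root_.mul_vecMulVec (Ly ^ 2) u v, _root_.vecMulVec_mul_vecMulVec, Matrix.trace_smul,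
        trace_vecMulVec', dotProduct_comm u ((Ly ^ 2) *ᵥ u), smul_eq_mul]
    rw [e1, e2, e3]; simp [smul_eq_mul]; ring
  have h2 : Matrix.trace (vecMulVec v u *
      ∑ α : Fin ninj, Matrix.diagonal (fun i => Om i α) * vecMulVec u v *
        Matrix.vecMulVec (fun k => X k α) (fun k => X k α)) =
      ∑ α : Fin ninj, (u ⬝ᵥ (Matrix.diagonal (fun i => Om i α)) *ᵥ u) *
        ((v ⬝ᵥ fun k => X k α) * ((fun k => X k α) ⬝ᵥ v)) := by
    rw [Matrix.mul_sum, Matrix.trace_sum]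
    refine Finset.sum_congr rfl fun α _ => ?_
    rw [_root_.mul_vecMulVec (Matrix.diagonal fun i => Om i α) u v,
      _root_.vecMulVec_mul_vecMulVec ((Matrix.diagonal fun i => Om i α) *ᵥ u) v
        (fun k => X k α) (fun k => X k α), Matrix.mul_smul,
      _root_.vecMulVec_mul_vecMulVec, Matrix.trace_smul, Matrix.trace_smul,
      trace_vecMulVec', smul_eq_mul, smul_eq_mul,
      dotProduct_comm (fun k => X k α) v]
    ring
  rw [h1, h2]
  -- expand RHS
  rw [Matrix.add_mulVec, dotProduct_add, Matrix.smul_mulVec, dotProduct_smul]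
  rw [Matrix.add_mulVec, Matrix.add_mulVec, dotProduct_add, dotProduct_add,
    Matrix.smul_mulVec, Matrix.smul_mulVec, dotProduct_smul,
    dotProduct_smul, Matrix.one_mulVec]
  have hsum : (∑ α : Fin ninj,
        (u ⬝ᵥ (Matrix.diagonal (fun i => Om i α)).mulVec u) •
          Matrix.vecMulVec (fun k => X k α) (fun k => X k α)) *ᵥ v =
      ∑ α : Fin ninj, (u ⬝ᵥ (Matrix.diagonal (fun i => Om i α)).mulVec u) •
        (((fun k => X k α) ⬝ᵥ v) • (fun k => X k α)) := by
    rw [sum_mulVec']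
    refine Finset.sum_congr rfl fun α _ => ?_
    rw [Matrix.smul_mulVec, _root_.vecMulVec_mulVec]
  rw [hsum, dotProduct_sum']
  simp only [dotProduct_smul, smul_eq_mul]
  congr 1
  exact Finset.sum_congr rfl fun α _ => by ring
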